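/- (Pareto optimality is trivial.) Assume there are percepts e⁰, e¹ ∈ E with r(e⁰) = 0 and r(e¹) = 1. Then every policy π is Pareto optimal in the class of all CCSs: there is no policy π̃ such that V^{π̃}_ν(ϵ) ≥ V^π_ν(ϵ) for every CCS ν and V^{π̃}_ρ(ϵ) > V^π_ρ(ϵ) for at least one CCS ρ. -/

import Mathlib

open scoped Classical

/-- A history: a finite alternating sequence of action–percept pairs. -/
abbrev Hist (A E : Type*) := List (A × E)

/-- A policy maps histories to actions. -/
abbrev Policy (A E : Type*) := Hist A E → A

/-- A chronological conditional semimeasure (CCS, environment):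
values in `[0,1]`, and the chronological semimeasure condition. -/
structure CCS (A E : Type*) [Fintype E] where
  val : Hist A E → ℝ
  nonneg : ∀ h, 0 ≤ val h
  le_one : ∀ h, val h ≤ 1
  chrono : ∀ (h : Hist A E) (a : A), (∑ e : E, val (h ++ [(a, e)])) ≤ val h

/-- `Gam γ t = Γ_t = ∑_{i ≥ t} γ_i`, the discount normalization factor. -/
noncomputable def Gam (γ : ℕ → ℝ) (t : ℕ) : ℝ := ∑' i : ℕ, γ (t + i)

/-- Extend a history by a list of percepts, with actions chosen by the policy `π`. -/
def extendH {A E : Type*} (π : Policy A E) : Hist A E → List E → Hist A E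
  | h, [] => h
  | h, e :: es => extendH π (h ++ [(π h, e)]) es

/-- The value `V^π_ν(ae_{<t})` of policy `π` in environment `ν` given history `h = ae_{<t}`
(with `t = h.length + 1`); `0` whenever `Γ_t ≤ 0` or `ν(e_{<t} ∣ a_{<t}) ≤ 0`. -/
noncomputable def V {A E : Type*} [Fintype E] (γ : ℕ → ℝ) (r : E → ℝ)
    (π : Policy A E) (ν : CCS A E) (h : Hist A E) : ℝ :=
  if 0 < Gam γ (h.length + 1) ∧ 0 < ν.val h then
    (1 / (Gam γ (h.length + 1) * ν.val h)) *
      ∑' n : ℕ, γ (h.length + 1 + n) *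
        ∑ es : Fin (n + 1) → E,
          r (es (Fin.last n)) * ν.val (extendH π h (List.ofFn es))
  else 0

/-- The value `V^π_ν(h a)` of a history ending in the action `a`:
the action at time `t` is `a`, and `π` is followed from time `t+1` on. -/
noncomputable def Vact {A E : Type*} [Fintype E] (γ : ℕ → ℝ) (r : E → ℝ)
    (π : Policy A E) (ν : CCS A E) (h : Hist A E) (a : A) : ℝ :=
  V γ r (fun h' => if h' = h then a else π h') ν h

/-- The optimal value `V^*_ν(h) = sup_π V^π_ν(h)`. -/
noncomputable def VOpt {A E : Type*} [Fintype E] (γ : ℕ → ℝ) (r : E → ℝ)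
    (ν : CCS A E) (h : Hist A E) : ℝ :=
  ⨆ π : Policy A E, V γ r π ν h

/-- The optimal value `V^*_ν(h a)` of a history ending in an action. -/
noncomputable def VOptAct {A E : Type*} [Fintype E] (γ : ℕ → ℝ) (r : E → ℝ)
    (ν : CCS A E) (h : Hist A E) (a : A) : ℝ :=
  ⨆ π : Policy A E, Vact γ r π ν h a

/-- A history is consistent with `π` iff each of its actions is the one chosen by `π`. -/
def Consistent {A E : Type*} (π : Policy A E) (h : Hist A E) : Prop :=
  ∀ (k : ℕ) (hk : k < h.length), (h.get ⟨k, hk⟩).1 = π (h.take k)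

lemma extendH_append {A E : Type*} (P : Policy A E) (h : Hist A E) (l : List E) (e : E) :
    extendH P h (l ++ [e]) = extendH P h l ++ [(P (extendH P h l), e)] := by
  induction l generalizing h with
  | nil => rfl
  | cons x xs ih => simp only [List.cons_append, extendH]; exact ih _

lemma extendH_length {A E : Type*} (P : Policy A E) (h : Hist A E) (l : List E) :
    (extendH P h l).length = h.length + l.length := by
  induction l generalizing h with
  | nil => rfl
  | cons x xs ih => simp [extendH, ih]; omega

lemma extendH_diverge {A E : Type*} (π πt : Policy A E) :
    ∀ (l : List E) (h : Hist A E), extendH π h l ≠ extendH πt h l →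
    ∃ l1 : List E, l1.length < l.length ∧ extendH π h l1 = extendH πt h l1 ∧
      π (extendH π h l1) ≠ πt (extendH π h l1) := by
  intro l
  induction l with
  | nil => intro h hne; exact absurd rfl hne
  | cons e es ih =>
    intro h hne
    by_cases hpa : π h = πt h
    · have hfix : extendH πt h (e :: es) = extendH πt (h ++ [(π h, e)]) es := by
        show extendH πt (h ++ [(πt h, e)]) es = _
        rw [hpa]
      have hfix2 : ∀ l1 : List E, extendH πt h (e :: l1) = extendH πt (h ++ [(π h, e)]) l1 := by
        intro l1
        show extendH πt (h ++ [(πt h, e)]) l1 = _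
        rw [hpa]
      have := ih (h ++ [(π h, e)]) (by
        intro hcon
        exact hne (by show extendH π (h ++ [(π h, e)]) es = extendH πt h (e :: es); rw [hfix]; exact hcon))
      obtain ⟨l1, hl1, heq, hne2⟩ := this
      refine ⟨e :: l1, by simpa using hl1, ?_, ?_⟩
      · show extendH π (h ++ [(π h, e)]) l1 = extendH πt h (e :: l1)
        rw [hfix2]; exact heq
      · show π (extendH π (h ++ [(π h, e)]) l1) ≠ πt (extendH π (h ++ [(π h, e)]) l1)
        exact hne2
    · exact ⟨[], by simp, rfl, hpa⟩

/-- Histories consistent with the deterministic percept rule `f`. -/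
def GoodFor {A E : Type*} (f : Hist A E → A → E) (h : Hist A E) : Prop :=
  ∀ i (hi : i < h.length), (h.get ⟨i, hi⟩).2 = f (h.take i) (h.get ⟨i, hi⟩).1

lemma goodFor_nil {A E : Type*} (f : Hist A E → A → E) : GoodFor f [] := by
  intro i hi; simp at hi

lemma goodFor_snoc {A E : Type*} (f : Hist A E → A → E) (h : Hist A E) (a : A) (e : E) :
    GoodFor f (h ++ [(a, e)]) ↔ GoodFor f h ∧ e = f h a := by
  constructor
  · intro hg
    constructor
    · intro i hi
      have hi' : i < (h ++ [(a, e)]).length := by simp; omega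
      have := hg i hi'
      rwa [List.get_eq_getElem, List.getElem_append_left hi, List.take_append_of_le_length (le_of_lt hi)] at this
    · have hi' : h.length < (h ++ [(a, e)]).length := by simp
      have := hg h.length hi'
      have hget : (h ++ [(a, e)]).get ⟨h.length, hi'⟩ = (a, e) := by
        simp
      rw [hget, List.take_left] at this
      exact this
  · rintro ⟨hg, he⟩ i hi
    rcases lt_or_eq_of_le (Nat.lt_succ_iff.mp (by simpa using hi)) with hlt | heq
    · rw [List.get_eq_getElem, List.getElem_append_left hlt, List.take_append_of_le_length (le_of_lt hlt)]
      exact hg i hlt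
    · subst heq
      have hget : (h ++ [(a, e)]).get ⟨h.length, hi⟩ = (a, e) := by
        simp
      rw [hget, List.take_left]
      exact he

/-- The deterministic trajectory of policy `P` in the environment given by rule `f`. -/
def traj {A E : Type*} (P : Policy A E) (f : Hist A E → A → E) : ℕ → Hist A E
  | 0 => []
  | m + 1 => traj P f m ++ [(P (traj P f m), f (traj P f m) (P (traj P f m)))]

lemma traj_length {A E : Type*} (P : Policy A E) (f : Hist A E → A → E) (m : ℕ) :
    (traj P f m).length = m := by
  induction m with
  | zero => rfl
  | succ m ih => simp [traj, ih]

lemma snoc_inj {α : Type*} {l₁ l₂ : List α} {x y : α} :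
    l₁ ++ [x] = l₂ ++ [y] ↔ l₁ = l₂ ∧ x = y := by
  constructor
  · intro h
    have h1 := congrArg List.dropLast h
    have h2 := congrArg (List.getLast? ·) h
    simp at h1 h2
    exact ⟨h1, h2⟩
  · rintro ⟨rfl, rfl⟩; rfl

lemma goodFor_extendH {A E : Type*} (f : Hist A E → A → E) (P : Policy A E) (l : List E) :
    GoodFor f (extendH P [] l) ↔ extendH P [] l = traj P f l.length := by
  induction l using List.reverseRecOn with
  | nil => simpa [extendH, traj] using goodFor_nil f
  | append_singleton l e ih =>
    rw [extendH_append, goodFor_snoc]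
    simp only [List.length_append, List.length_singleton, traj, snoc_inj]
    rw [ih]
    simp only [Prod.mk.injEq]
    constructor
    · rintro ⟨h1, h2⟩
      exact ⟨h1, ⟨by rw [h1], by rw [← h1]; exact h2⟩⟩
    · rintro ⟨h1, _, h3⟩
      exact ⟨h1, by rw [h1]; exact h3⟩

lemma extendH_map_snd {A E : Type*} (P : Policy A E) (h : Hist A E) (l : List E) :
    (extendH P h l).map Prod.snd = h.map Prod.snd ++ l := by
  induction l generalizing h with
  | nil => simp [extendH]
  | cons x xs ih => simp [extendH, ih]

/-- The percept at step `m` (0-indexed) along the trajectory. -/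
def tperc {A E : Type*} (P : Policy A E) (f : Hist A E → A → E) (m : ℕ) : E :=
  f (traj P f m) (P (traj P f m))

lemma traj_eq_extendH {A E : Type*} (P : Policy A E) (f : Hist A E → A → E) (m : ℕ) :
    traj P f m = extendH P [] (List.ofFn fun i : Fin m => tperc P f i) := by
  induction m with
  | zero => rfl
  | succ m ih =>
    have hofn : (List.ofFn fun i : Fin (m+1) => tperc P f i) =
        (List.ofFn fun i : Fin m => tperc P f i) ++ [tperc P f m] := by
      rw [List.ofFn_succ']
      simp [List.concat_eq_append]
    rw [hofn, extendH_append]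
    show traj P f (m+1) = _
    rw [traj, snoc_inj]
    refine ⟨ih, ?_⟩
    rw [← ih]
    rfl

lemma extendH_eq_traj_iff {A E : Type*} (P : Policy A E) (f : Hist A E → A → E) (m : ℕ)
    (es : Fin m → E) :
    extendH P [] (List.ofFn es) = traj P f m ↔ es = fun i : Fin m => tperc P f i := by
  rw [traj_eq_extendH]
  constructor
  · intro h
    have := congrArg (List.map Prod.snd) h
    rw [extendH_map_snd, extendH_map_snd] at this
    simp only [List.map_nil, List.nil_append] at this
    exact List.ofFn_inj.mp this
  · intro h; rw [h]

lemma traj_getD {A E : Type*} (P : Policy A E) (f : Hist A E → A → E) (k : ℕ) (d : A × E) :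
    ∀ m, k < m → ((traj P f m).getD k d).2 = tperc P f k := by
  intro m
  induction m with
  | zero => omega
  | succ m ih =>
    intro hkm
    rcases Nat.lt_or_ge k m with hlt | hge
    · show ((traj P f m ++ _).getD k d).2 = _
      rw [show (traj P f m ++ [(P (traj P f m), f (traj P f m) (P (traj P f m)))]).getD k d
          = (traj P f m).getD k d from by
        simp [List.getD, List.getElem?_append, traj_length P f m, hlt]]
      exact ih hlt
    · have hk : k = m := by omega
      subst hk
      show ((traj P f k ++ [(P (traj P f k), f (traj P f k) (P (traj P f k)))]).getD k d).2 = _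
      have hx := List.getElem?_concat_length (l := traj P f k)
        (a := (P (traj P f k), f (traj P f k) (P (traj P f k))))
      rw [traj_length] at hx
      simp [List.getD, hx, tperc]

/-- The deterministic environment whose percepts follow the rule `f`. -/
noncomputable def detEnv {A E : Type*} [Fintype E] (f : Hist A E → A → E) : CCS A E where
  val h := if GoodFor f h then 1 else 0
  nonneg h := by split <;> norm_num
  le_one h := by split <;> norm_num
  chrono h a := by
    have step : ∀ e : E, (if GoodFor f (h ++ [(a, e)]) then (1:ℝ) else 0) =
        if e = f h a then (if GoodFor f h then (1:ℝ) else 0) else 0 := by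
      intro e
      by_cases hg : GoodFor f h <;> by_cases hee : e = f h a <;>
        simp [goodFor_snoc, hg, hee]
    rw [Finset.sum_congr rfl (fun e _ => step e), Finset.sum_ite_eq']
    simp

/-- The percept rule: first follow the percept list `l1`; at step `l1.length + 1` emit `e1`
iff the action agrees with `π`, and afterwards repeat that percept forever. -/
noncomputable def envF {A E : Type*} [Nonempty A] (π : Policy A E) (l1 : List E) (e0 e1 : E) :
    Hist A E → A → E := fun h a =>
  if h.length < l1.length then l1.getD h.length e0
  else if h.length = l1.length then (if a = π h then e1 else e0)
  else (h.getD l1.length (Classical.arbitrary A, e0)).2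

lemma traj_envF_take {A E : Type*} [Nonempty A] (π : Policy A E) (l1 : List E) (e0 e1 : E)
    (P : Policy A E) : ∀ m, m ≤ l1.length →
    traj P (envF π l1 e0 e1) m = extendH P [] (l1.take m) := by
  intro m
  induction m with
  | zero => simp [traj, extendH]
  | succ m ih =>
    intro hm
    have hm' : m < l1.length := by omega
    have htm := ih (le_of_lt hm')
    have hstep : envF π l1 e0 e1 (traj P (envF π l1 e0 e1) m) (P (traj P (envF π l1 e0 e1) m)) =
        l1.getD m e0 := by
      generalize hT : traj P (envF π l1 e0 e1) m = t
      have hlen' : t.length = m := by rw [← hT]; exact traj_length _ _ _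
      unfold envF
      rw [hlen', if_pos hm']
    have htake : l1.take (m + 1) = l1.take m ++ [l1.getD m e0] := by
      rw [List.take_succ, List.getElem?_eq_getElem hm']
      simp [List.getD, List.getElem?_eq_getElem hm']
    rw [traj, hstep, htake, extendH_append, ← htm]

lemma tperc_envF_lt {A E : Type*} [Nonempty A] (π : Policy A E) (l1 : List E) (e0 e1 : E)
    (P : Policy A E) (m : ℕ) (hm : m < l1.length) :
    tperc P (envF π l1 e0 e1) m = l1.getD m e0 := by
  unfold tperc
  generalize hT : traj P (envF π l1 e0 e1) m = t
  have hlen' : t.length = m := by rw [← hT]; exact traj_length _ _ _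
  unfold envF
  rw [hlen', if_pos hm]

lemma tperc_envF_k {A E : Type*} [Nonempty A] (π : Policy A E) (l1 : List E) (e0 e1 : E)
    (P : Policy A E) :
    tperc P (envF π l1 e0 e1) l1.length =
      if P (traj P (envF π l1 e0 e1) l1.length) = π (traj P (envF π l1 e0 e1) l1.length)
      then e1 else e0 := by
  unfold tperc
  generalize hT : traj P (envF π l1 e0 e1) l1.length = t
  have hlen' : t.length = l1.length := by rw [← hT]; exact traj_length _ _ _
  unfold envF
  rw [hlen', if_neg (lt_irrefl _), if_pos rfl]

lemma tperc_envF_gt {A E : Type*} [Nonempty A] (π : Policy A E) (l1 : List E) (e0 e1 : E)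
    (P : Policy A E) (m : ℕ) (hm : l1.length < m) :
    tperc P (envF π l1 e0 e1) m = tperc P (envF π l1 e0 e1) l1.length := by
  conv_lhs => rw [tperc]
  have hgd := traj_getD P (envF π l1 e0 e1) l1.length (Classical.arbitrary A, e0) m hm
  generalize hT : traj P (envF π l1 e0 e1) m = t at hgd
  have hlen' : t.length = m := by rw [← hT]; exact traj_length _ _ _
  unfold envF
  rw [hlen', if_neg (by omega), if_neg (by omega)]
  exact hgd

/-- **Pareto optimality is trivial**: every policy is Pareto optimal in the class of
all CCSs. -/
theorem pareto_optimality_is_trivial {A E : Type*} [Fintype A] [Nonempty A] [Fintype E] [Nonempty E]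
    (γ : ℕ → ℝ) (hγ0 : ∀ t, 0 ≤ γ t) (hγs : Summable γ)
    (r : E → ℝ) (hr : ∀ e : E, 0 ≤ r e ∧ r e ≤ 1)
    (e0 e1 : E) (hr0 : r e0 = 0) (hr1 : r e1 = 1)
    (π : Policy A E) :
    ¬ ∃ πt : Policy A E,
        (∀ ν : CCS A E, V γ r π ν [] ≤ V γ r πt ν []) ∧
        ∃ ρ : CCS A E, V γ r π ρ [] < V γ r πt ρ [] := by
  rintro ⟨πt, hall, ρ, hlt⟩
  have hγs1 : Summable (fun m : ℕ => γ (1 + m)) :=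
    ((summable_nat_add_iff 1).mpr hγs).congr (fun m => by ring_nf)
  -- Step 1: the two policies must generate different histories at some γ-relevant depth
  have hkey : ∃ n : ℕ, γ (1 + n) ≠ 0 ∧ ∃ es : Fin (n + 1) → E,
      extendH π [] (List.ofFn es) ≠ extendH πt [] (List.ofFn es) := by
    by_contra hcon
    push_neg at hcon
    have heqV : V γ r π ρ [] = V γ r πt ρ [] := by
      unfold V
      split
      · congr 1
        apply tsum_congr
        intro m
        rcases eq_or_ne (γ (List.length ([] : Hist A E) + 1 + m)) 0 with h0 | h0
        · rw [h0]; ring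
        · congr 1
          apply Finset.sum_congr rfl
          intro es _
          rw [hcon m (by simpa using h0) es]
      · rfl
    exact absurd heqV (ne_of_lt hlt)
  obtain ⟨n, hγn', es₀, hnees⟩ := hkey
  have hγn : 0 < γ (1 + n) := (hγ0 _).lt_of_ne (Ne.symm hγn')
  -- Step 2: a common reachable history where the policies disagree
  obtain ⟨l1, hl1len, hl1eq, hl1ne⟩ := extendH_diverge π πt (List.ofFn es₀) [] hnees
  have hkn : l1.length ≤ n := by
    have := hl1len
    simp only [List.length_ofFn] at this
    omega
  set k := l1.length with hkdef
  set f := envF π l1 e0 e1 with hfdef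
  set ν := detEnv (A := A) (E := E) f with hν
  -- basic facts
  have hGam1 : 0 < Gam γ 1 :=
    lt_of_lt_of_le hγn (Summable.le_tsum hγs1 n (fun j _ => hγ0 _))
  have hνnil : ν.val [] = 1 := by
    show (if GoodFor f ([] : Hist A E) then (1:ℝ) else 0) = 1
    rw [if_pos (goodFor_nil f)]
  -- Step 3: value formula in the deterministic environment
  have hval : ∀ P : Policy A E, V γ r P ν [] =
      (1 / Gam γ 1) * ∑' m : ℕ, γ (1 + m) * r (tperc P f m) := by
    intro P
    unfold V
    rw [if_pos (⟨hGam1, by rw [hνnil]; norm_num⟩ : 0 < Gam γ (List.length ([] : Hist A E) + 1) ∧ 0 < ν.val [])]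
    have hsum : ∀ m : ℕ, (∑ es : Fin (m + 1) → E,
        r (es (Fin.last m)) * ν.val (extendH P [] (List.ofFn es))) = r (tperc P f m) := by
      intro m
      have hterm : ∀ es : Fin (m + 1) → E,
          r (es (Fin.last m)) * ν.val (extendH P [] (List.ofFn es)) =
          if es = (fun i : Fin (m + 1) => tperc P f i) then r (es (Fin.last m)) else 0 := by
        intro es
        have : ν.val (extendH P [] (List.ofFn es)) =
            if es = (fun i : Fin (m + 1) => tperc P f i) then 1 else 0 := by
          show (if GoodFor f (extendH P [] (List.ofFn es)) then (1:ℝ) else 0) = _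
          rw [goodFor_extendH]
          congr 1
          rw [show (List.ofFn es).length = m + 1 from by simp]
          rw [extendH_eq_traj_iff]
        rw [this]
        split <;> simp
      rw [Finset.sum_congr rfl (fun es _ => hterm es), Finset.sum_ite_eq']
      simp
    simp only [List.length_nil]
    rw [tsum_congr (fun m => by rw [hsum m])]
    rw [hνnil]
    norm_num
  -- Step 4: the trajectories agree up to step k, then diverge
  have htraj : ∀ P : Policy A E, traj P f k = extendH P [] l1 := by
    intro P
    have := traj_envF_take π l1 e0 e1 P k le_rfl
    rwa [List.take_length] at this
  have htrajeq : traj πt f k = traj π f k := by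
    rw [htraj, htraj, hl1eq]
  have hpeq : ∀ m, m < k → tperc π f m = tperc πt f m := by
    intro m hm
    rw [hfdef, tperc_envF_lt π l1 e0 e1 π m hm, tperc_envF_lt π l1 e0 e1 πt m hm]
  have hpπ : ∀ m, k ≤ m → tperc π f m = e1 := by
    have hk1 : tperc π f k = e1 := by
      rw [hfdef, tperc_envF_k]
      rw [if_pos rfl]
    intro m hm
    rcases eq_or_lt_of_le hm with rfl | h
    · exact hk1
    · rw [hfdef, tperc_envF_gt π l1 e0 e1 π m h, ← hfdef, hk1]
  have hpπt : ∀ m, k ≤ m → tperc πt f m = e0 := by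
    have hk1 : tperc πt f k = e0 := by
      rw [hfdef, tperc_envF_k]
      rw [if_neg]
      rw [← hfdef, htrajeq, htraj π]
      exact fun hc => hl1ne hc.symm
    intro m hm
    rcases eq_or_lt_of_le hm with rfl | h
    · exact hk1
    · rw [hfdef, tperc_envF_gt π l1 e0 e1 πt m h, ← hfdef, hk1]
  -- Step 5: strict value comparison
  have hsummable : ∀ P : Policy A E, Summable (fun m : ℕ => γ (1 + m) * r (tperc P f m)) := by
    intro P
    refine Summable.of_nonneg_of_le (fun m => mul_nonneg (hγ0 _) (hr _).1)
      (fun m => mul_le_of_le_one_right (hγ0 _) (hr _).2) hγs1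
  have hlt2 : V γ r πt ν [] < V γ r π ν [] := by
    rw [hval π, hval πt]
    refine mul_lt_mul_of_pos_left ?_ (by positivity)
    refine Summable.tsum_lt_tsum (i := n) ?_ ?_ (hsummable πt) (hsummable π)
    · intro m
      show γ (1 + m) * r (tperc πt f m) ≤ γ (1 + m) * r (tperc π f m)
      rcases lt_or_ge m k with h | h
      · rw [hpeq m h]
      · rw [hpπ m h, hpπt m h, hr1, hr0]
        simpa using hγ0 (1 + m)
    · show γ (1 + n) * r (tperc πt f n) < γ (1 + n) * r (tperc π f n)
      rw [hpπ n hkn, hpπt n hkn, hr1, hr0]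
      simpa using hγn
  exact absurd (hall ν) (not_le.mpr hlt2)
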